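/- For all x ∈ ℝ, the minimum of G₊(x) = |1 + e(x) + e(3x)|² over ℝ is greater than 1/e, and the minimum of G₋(x) = |1 + e(x) - e(3x)|² over ℝ is greater than 1/9. -/

import Mathlib

open Real Complex

theorem stmt_10 (x : ℝ) :
    1 / Real.exp 1 <
      (‖(1 + Complex.exp (2 * π * Complex.I * x) +
        Complex.exp (2 * π * Complex.I * (3 * x)))‖) ^ 2 ∧
    1 / 9 <
      (‖(1 + Complex.exp (2 * π * Complex.I * x) -
        Complex.exp (2 * π * Complex.I * (3 * x)))‖) ^ 2 := by
  set c := Real.cos (2 * π * x) with hc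
  set s := Real.sin (2 * π * x) with hs
  have h1 : Complex.exp (2 * π * Complex.I * x)
      = (c : ℂ) + (s : ℂ) * Complex.I := by
    rw [show (2 * π * Complex.I * (x : ℂ)) = ((2 * π * x : ℝ) : ℂ) * Complex.I by
      push_cast; ring, Complex.exp_mul_I, ← Complex.ofReal_cos, ← Complex.ofReal_sin]
  have h3 : Complex.exp (2 * π * Complex.I * (3 * x))
      = ((4 * c ^ 3 - 3 * c : ℝ) : ℂ) + ((3 * s - 4 * s ^ 3 : ℝ) : ℂ) * Complex.I := by
    rw [show (2 * π * Complex.I * (3 * (x : ℂ))) = ((3 * (2 * π * x) : ℝ) : ℂ) * Complex.I by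
      push_cast; ring, Complex.exp_mul_I, ← Complex.ofReal_cos, ← Complex.ofReal_sin,
      Real.cos_three_mul, Real.sin_three_mul]
  have hsc : s ^ 2 + c ^ 2 = 1 := Real.sin_sq_add_cos_sq _
  have hc1 : -1 ≤ c := Real.neg_one_le_cos _
  have hc2 : c ≤ 1 := Real.cos_le_one _
  have he : (2.7182818283 : ℝ) < Real.exp 1 := Real.exp_one_gt_d9
  have hep : (0 : ℝ) < Real.exp 1 := Real.exp_pos 1
  constructor
  · have hz : (1 + Complex.exp (2 * π * Complex.I * x) +
        Complex.exp (2 * π * Complex.I * (3 * x)))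
        = ((1 + c + (4 * c ^ 3 - 3 * c) : ℝ) : ℂ)
          + ((s + (3 * s - 4 * s ^ 3) : ℝ) : ℂ) * Complex.I := by
      rw [h1, h3]; push_cast; ring
    rw [hz, Complex.sq_norm, Complex.normSq_add_mul_I]
    have hred : (1 + c + (4 * c ^ 3 - 3 * c)) ^ 2 + (s + (3 * s - 4 * s ^ 3)) ^ 2
        = 8 * c ^ 3 + 4 * c ^ 2 - 4 * c + 1 := by
      linear_combination (16 * s ^ 4 - 16 * s ^ 2 - 16 * s ^ 2 * c ^ 2 + 16 * c ^ 4) * hsc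
    rw [hred, div_lt_iff₀ hep]
    nlinarith [sq_nonneg ((c - 0.2743) * (c + 1)), sq_nonneg ((c - 0.2743) * (c - 1)),
      sq_nonneg (c - 0.2743)]
  · have hz : (1 + Complex.exp (2 * π * Complex.I * x) -
        Complex.exp (2 * π * Complex.I * (3 * x)))
        = ((1 + c - (4 * c ^ 3 - 3 * c) : ℝ) : ℂ)
          + ((s - (3 * s - 4 * s ^ 3) : ℝ) : ℂ) * Complex.I := by
      rw [h1, h3]; push_cast; ring
    rw [hz, Complex.sq_norm, Complex.normSq_add_mul_I]
    have hred : (1 + c - (4 * c ^ 3 - 3 * c)) ^ 2 + (s - (3 * s - 4 * s ^ 3)) ^ 2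
        = -8 * c ^ 3 - 4 * c ^ 2 + 8 * c + 5 := by
      linear_combination (16 * s ^ 4 - 16 * s ^ 2 * c ^ 2 + 16 * c ^ 4 - 16 * c ^ 2 + 4) * hsc
    rw [hred]
    nlinarith [sq_nonneg ((c + 0.7676) * (c + 1)), sq_nonneg ((c + 0.7676) * (c - 1)),
      sq_nonneg (c + 0.7676)]
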